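/- Let μ be a partition. Then PR1(μ) := Π_{s ∈ dg(μ')} (1 - q^{arm(s)} t^{leg(s)+1}) equals PR2(inc(μ)) := Π_{i≥1} (t;t)_{m_i} · Π_{s ∈ dg(inc(μ)), s not in the bottom row} (1 - q^{leg(s)+1} t^{arm(s)+1}), where m_i is the number of parts of μ equal to i and (t;t)_k = (1-t)(1-t^2)···(1-t^k). -/

import Mathlib

/-- The arm of the cell `(i, r)` in the diagram of a weak composition `α` (columns of
heights `α i`, rows numbered from `1` at the bottom): the number of cells to the right
of `(i,r)` in row `r` lying in columns of height at most `α i`, plus the number of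
cells to the left of `(i, r-1)` in row `r-1` lying in columns of height less than
`α i`. -/
def armC {n : ℕ} (α : Fin n → ℕ) (i : Fin n) (r : ℕ) : ℕ :=
  (Finset.univ.filter (fun j : Fin n => i < j ∧ r ≤ α j ∧ α j ≤ α i)).card +
  (Finset.univ.filter (fun j : Fin n => j < i ∧ 2 ≤ r ∧ r - 1 ≤ α j ∧ α j < α i)).card

/-- The leg of the cell `(i, r)`: the number of cells above it in its column. -/
def legC {n : ℕ} (α : Fin n → ℕ) (i : Fin n) (r : ℕ) : ℕ := α i - r

/-- `(t;t)_k = (1-t)(1-t²)⋯(1-t^k)`. -/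
def ttpoch {R : Type*} [CommRing R] (t : R) (k : ℕ) : R :=
  ∏ i ∈ Finset.range k, (1 - t ^ (i + 1))

open Finset

namespace Stmt10Aux
variable {n : ℕ} (μ : Fin n → ℕ)

/-- number of parts ≥ v -/
def Cnt (v : ℕ) : ℕ := (Finset.univ.filter fun k : Fin n => v ≤ μ k).card

lemma cnt_le (v : ℕ) : Cnt μ v ≤ n := by
  simpa [Cnt] using (card_filter_le univ fun k : Fin n => v ≤ μ k)

variable {μ}

lemma lt_cnt_iff (hμ : Antitone μ) (v : ℕ) (j : Fin n) : j.val < Cnt μ v ↔ v ≤ μ j := by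
  constructor
  · intro h; by_contra hv; push_neg at hv
    have hsub : univ.filter (fun k : Fin n => v ≤ μ k) ⊆ Finset.Iio j := by
      intro k hk
      simp only [mem_filter, mem_univ, true_and] at hk
      simp only [Finset.mem_Iio]
      by_contra hjk; push_neg at hjk
      exact absurd (hμ hjk) (by omega)
    have := card_le_card hsub
    rw [Fin.card_Iio] at this
    exact absurd h (by unfold Cnt; omega)
  · intro h
    have hsub : Finset.Iic j ⊆ univ.filter (fun k : Fin n => v ≤ μ k) := by
      intro k hk
      simp only [Finset.mem_Iic] at hk
      simp only [mem_filter, mem_univ, true_and]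
      exact le_trans h (hμ hk)
    have := card_le_card hsub
    rw [Fin.card_Iic] at this
    unfold Cnt; omega

lemma cnt_anti {v w : ℕ} (h : v ≤ w) : Cnt μ w ≤ Cnt μ v := by
  apply card_le_card
  intro k hk
  simp only [mem_filter, mem_univ, true_and] at hk ⊢
  omega

lemma card_val_Ico (a b : ℕ) (hb : b ≤ n) :
    (univ.filter fun j : Fin n => a ≤ j.val ∧ j.val < b).card = b - a := by
  have h : ∀ m ∈ Finset.Ico a b, m < n := fun m hm => lt_of_lt_of_le (mem_Ico.mp hm).2 hb
  have : (univ.filter fun j : Fin n => a ≤ j.val ∧ j.val < b) = (Finset.Ico a b).attachFin h := by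
    ext j
    simp [mem_attachFin, Finset.mem_Ico]
  rw [this, card_attachFin, Nat.card_Ico]

lemma i_lt_cnt (hμ : Antitone μ) {i : Fin n} {r : ℕ} (hr : r ≤ μ i) : i.val < Cnt μ r :=
  (lt_cnt_iff hμ r i).mpr hr

lemma armC_dec (hμ : Antitone μ) (i : Fin n) (r : ℕ) (hr : r ≤ μ i) :
    armC μ i r = Cnt μ r - 1 - i.val := by
  have hlt : i.val < Cnt μ r := i_lt_cnt hμ hr
  unfold armC
  have h2 : (univ.filter (fun j : Fin n => j < i ∧ 2 ≤ r ∧ r - 1 ≤ μ j ∧ μ j < μ i)) = ∅ := by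
    apply filter_false_of_mem
    intro j _
    rintro ⟨hji, -, -, hlt'⟩
    exact absurd (hμ (le_of_lt hji)) (by omega)
  have h1 : (univ.filter (fun j : Fin n => i < j ∧ r ≤ μ j ∧ μ j ≤ μ i)) =
      (univ.filter fun j : Fin n => i.val + 1 ≤ j.val ∧ j.val < Cnt μ r) := by
    ext j
    simp only [mem_filter, mem_univ, true_and, Fin.lt_def]
    constructor
    · rintro ⟨h1, h2, -⟩
      exact ⟨by omega, (lt_cnt_iff hμ r j).mpr h2⟩
    · rintro ⟨h1, h2⟩
      refine ⟨by omega, (lt_cnt_iff hμ r j).mp h2, hμ (by omega : i ≤ j)⟩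
  rw [h1, h2, card_val_Ico _ _ (cnt_le μ r), card_empty]
  omega

lemma card_filter_rev (Q : Fin n → Prop) [DecidablePred Q] :
    (univ.filter fun j : Fin n => Q (Fin.rev j)).card = (univ.filter Q).card := by
  apply Finset.card_nbij' Fin.rev Fin.rev <;> intro x <;> simp [Fin.rev_rev]

lemma card_fiber (hμ : Antitone μ) (v : ℕ) :
    (univ.filter fun j : Fin n => μ j = v).card = Cnt μ v - Cnt μ (v + 1) := by
  have : (univ.filter fun j : Fin n => μ j = v) =
      (univ.filter fun j : Fin n => Cnt μ (v+1) ≤ j.val ∧ j.val < Cnt μ v) := by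
    ext j
    simp only [mem_filter, mem_univ, true_and]
    have h1 := lt_cnt_iff hμ v j
    have h2 := lt_cnt_iff hμ (v+1) j
    omega
  rw [this, card_val_Ico _ _ (cnt_le μ v)]

lemma rev_lt_iff {a b : Fin n} : a.rev < b ↔ b.rev < a := by
  have := a.isLt; have := b.isLt
  simp only [Fin.lt_def, Fin.val_rev]; omega

lemma lt_rev_iff {a b : Fin n} : a < b.rev ↔ b < a.rev := by
  have := a.isLt; have := b.isLt
  simp only [Fin.lt_def, Fin.val_rev]; omega

lemma armC_rev (hμ : Antitone μ) (i' : Fin n) (r' : ℕ) (h2 : 2 ≤ r') (hr : r' ≤ μ (Fin.rev i')) :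
    armC (μ ∘ Fin.rev) i' r' =
      ((Fin.rev i').val - Cnt μ (μ (Fin.rev i') + 1)) +
        (Cnt μ (r' - 1) - Cnt μ (μ (Fin.rev i'))) := by
  set k := Fin.rev i' with hk
  set w := μ k with hw
  have hik : i' = Fin.rev k := by rw [hk, Fin.rev_rev]
  have hklt : k.val < Cnt μ w := i_lt_cnt hμ (le_refl w)
  have hcw : Cnt μ w ≤ Cnt μ (r'-1) := cnt_anti (by omega)
  have hcw2 : Cnt μ w ≤ Cnt μ r' := cnt_anti (by omega)
  unfold armC
  have h1 : (univ.filter (fun j : Fin n => i' < j ∧ r' ≤ (μ ∘ Fin.rev) j ∧ (μ ∘ Fin.rev) j ≤ (μ ∘ Fin.rev) i')).card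
      = (univ.filter fun k' : Fin n => Cnt μ (w+1) ≤ k'.val ∧ k'.val < k.val).card := by
    rw [← card_filter_rev (fun k' : Fin n => Cnt μ (w+1) ≤ k'.val ∧ k'.val < k.val)]
    congr 1
    ext j
    simp only [mem_filter, mem_univ, true_and, Function.comp_apply, hik, Fin.rev_rev]
    rw [rev_lt_iff, Fin.lt_def]
    constructor
    · rintro ⟨hjk, hr1, hr2⟩
      have := (lt_cnt_iff hμ (w+1) (Fin.rev j))
      omega
    · rintro ⟨ha, hb⟩
      have hmem : (Fin.rev j).val < Cnt μ r' := by omega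
      have h3 := (lt_cnt_iff hμ r' (Fin.rev j)).mp hmem
      have h4 := (lt_cnt_iff hμ (w+1) (Fin.rev j))
      exact ⟨by omega, h3, by omega⟩
  have h1' : (univ.filter fun k' : Fin n => Cnt μ (w+1) ≤ k'.val ∧ k'.val < k.val).card
      = k.val - Cnt μ (w+1) := card_val_Ico _ _ (le_of_lt k.isLt)
  have h2' : (univ.filter (fun j : Fin n => j < i' ∧ 2 ≤ r' ∧ r' - 1 ≤ (μ ∘ Fin.rev) j ∧ (μ ∘ Fin.rev) j < (μ ∘ Fin.rev) i')).card
      = (univ.filter fun k' : Fin n => Cnt μ w ≤ k'.val ∧ k'.val < Cnt μ (r'-1)).card := by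
    rw [← card_filter_rev (fun k' : Fin n => Cnt μ w ≤ k'.val ∧ k'.val < Cnt μ (r'-1))]
    congr 1
    ext j
    simp only [mem_filter, mem_univ, true_and, Function.comp_apply, hik, Fin.rev_rev]
    rw [lt_rev_iff, Fin.lt_def]
    constructor
    · rintro ⟨hjk, -, hr1, hr2⟩
      have h3 := lt_cnt_iff hμ w (Fin.rev j)
      have h4 := (lt_cnt_iff hμ (r'-1) (Fin.rev j)).mpr hr1
      omega
    · rintro ⟨ha, hb⟩
      have h3 := lt_cnt_iff hμ w (Fin.rev j)
      have h4 := (lt_cnt_iff hμ (r'-1) (Fin.rev j)).mp hb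
      exact ⟨by omega, h2, h4, by omega⟩
  have h2'' : (univ.filter fun k' : Fin n => Cnt μ w ≤ k'.val ∧ k'.val < Cnt μ (r'-1)).card
      = Cnt μ (r'-1) - Cnt μ w := card_val_Ico _ _ (cnt_le μ _)
  rw [h1, h1', h2', h2'']

lemma top_fiber {R : Type*} [CommRing R] (t : R) (hμ : Antitone μ) (v : ℕ)
    (i0 : Fin n) (h0 : μ i0 = v) :
    ∏ i ∈ univ.filter (fun j : Fin n => μ j = v), (1 - t ^ (Cnt μ v - i.val)) =
      ttpoch t ((univ.filter fun j : Fin n => μ j = v).card) := by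
  rw [card_fiber hμ, ttpoch]
  have hle := cnt_le μ v
  have h1 : i0.val < Cnt μ v := i_lt_cnt hμ h0.ge
  have hp : Cnt μ (v+1) ≤ Cnt μ v := cnt_anti (by omega)
  refine Finset.prod_nbij' (fun i : Fin n => Cnt μ v - 1 - i.val)
    (fun e => (⟨Cnt μ v - 1 - e, by omega⟩ : Fin n)) ?_ ?_ ?_ ?_ ?_
  · intro a ha
    simp only [mem_filter, mem_univ, true_and] at ha
    have hb1 := (lt_cnt_iff hμ v a).mpr ha.ge
    have hb2 : ¬ (a.val < Cnt μ (v+1)) := fun hc => by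
      have := (lt_cnt_iff hμ (v+1) a).mp hc; omega
    simp only [mem_range]; omega
  · intro e he
    simp only [mem_range] at he
    simp only [mem_filter, mem_univ, true_and]
    have hb1 := (lt_cnt_iff hμ v (⟨Cnt μ v - 1 - e, by omega⟩ : Fin n)).mp (by simp; omega)
    have hb2 : ¬ ((⟨Cnt μ v - 1 - e, by omega⟩ : Fin n).val < Cnt μ (v+1)) := by simp; omega
    have hb3 := (lt_cnt_iff hμ (v+1) (⟨Cnt μ v - 1 - e, by omega⟩ : Fin n)).mpr
    omega
  · intro a ha
    simp only [mem_filter, mem_univ, true_and] at ha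
    have hb1 := (lt_cnt_iff hμ v a).mpr ha.ge
    apply Fin.ext; simp; omega
  · intro e he
    simp only [mem_range] at he
    simp; omega
  · intro a ha
    simp only [mem_filter, mem_univ, true_and] at ha
    have hb1 := (lt_cnt_iff hμ v a).mpr ha.ge
    show (1 : R) - t ^ (Cnt μ v - a.val) = 1 - t ^ ((Cnt μ v - 1 - a.val) + 1)
    congr 2
    omega

lemma top_cells {R : Type*} [CommRing R] (t : R) (hμ : Antitone μ) :
    (∏ i : Fin n, if 0 < μ i then (1 - t ^ (Cnt μ (μ i) - i.val)) else 1)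
    = ∏ v ∈ (Finset.image μ Finset.univ).filter (fun v => 0 < v),
        ttpoch t ((univ.filter fun j : Fin n => μ j = v).card) := by
  rw [← Finset.prod_fiberwise_of_maps_to (t := Finset.image μ Finset.univ)
      (fun i _ => mem_image_of_mem μ (mem_univ i))
      (fun i => if 0 < μ i then (1 - t ^ (Cnt μ (μ i) - i.val)) else 1)]
  rw [← prod_filter_mul_prod_filter_not (Finset.image μ Finset.univ) (fun v => 0 < v)]
  have h2 : ∏ v ∈ (Finset.image μ Finset.univ).filter (fun v => ¬ 0 < v),
      ∏ i ∈ univ.filter (fun j : Fin n => μ j = v),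
        (if 0 < μ i then (1 - t ^ (Cnt μ (μ i) - i.val)) else 1) = 1 := by
    apply Finset.prod_eq_one
    intro v hv
    simp only [mem_filter] at hv
    apply Finset.prod_eq_one
    intro i hi
    simp only [mem_filter, mem_univ, true_and] at hi
    rw [if_neg (by omega)]
  rw [h2, mul_one]
  apply Finset.prod_congr rfl
  intro v hv
  simp only [mem_filter, Finset.mem_image, mem_univ, true_and] at hv
  obtain ⟨⟨i0, h0⟩, hvpos⟩ := hv
  rw [← top_fiber t hμ v i0 h0]
  apply Finset.prod_congr rfl
  intro i hi
  simp only [mem_filter, mem_univ, true_and] at hi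
  rw [hi, if_pos hvpos]

def sigMap (hμ : Antitone μ) (i : Fin n) : Fin n :=
  ⟨n - Cnt μ (μ i) + (i.val - Cnt μ (μ i + 1)), by
    have h1 : i.val < Cnt μ (μ i) := i_lt_cnt hμ le_rfl
    have h2 := cnt_le μ (μ i)
    have := i.isLt
    omega⟩

def tauMap (hμ : Antitone μ) (i' : Fin n) : Fin n :=
  ⟨Cnt μ (μ (Fin.rev i') + 1) + (Cnt μ (μ (Fin.rev i')) - 1 - (Fin.rev i').val), by
    have h1 : (Fin.rev i').val < Cnt μ (μ (Fin.rev i')) := i_lt_cnt hμ le_rfl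
    have h2 := cnt_le μ (μ (Fin.rev i'))
    have h3 : ¬ ((Fin.rev i').val < Cnt μ (μ (Fin.rev i') + 1)) := fun hc => by
      have := (lt_cnt_iff hμ _ _).mp hc; omega
    omega⟩

lemma sig_p_le (hμ : Antitone μ) (i : Fin n) : Cnt μ (μ i + 1) ≤ i.val := by
  by_contra hc
  have := (lt_cnt_iff hμ (μ i + 1) i).mp (by omega)
  omega

lemma sig_rev_val (hμ : Antitone μ) (i : Fin n) :
    (Fin.rev (sigMap hμ i)).val = Cnt μ (μ i) - 1 - (i.val - Cnt μ (μ i + 1)) := by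
  have h1 : i.val < Cnt μ (μ i) := i_lt_cnt hμ le_rfl
  have h2 := cnt_le μ (μ i)
  have h3 := sig_p_le hμ i
  simp only [Fin.val_rev, sigMap]
  omega

lemma sig_mu (hμ : Antitone μ) (i : Fin n) : μ (Fin.rev (sigMap hμ i)) = μ i := by
  have h1 : i.val < Cnt μ (μ i) := i_lt_cnt hμ le_rfl
  have h2 := cnt_le μ (μ i)
  have h3 := sig_p_le hμ i
  have h4 := sig_rev_val hμ i
  set m := Fin.rev (sigMap hμ i)
  have hm1 : m.val < Cnt μ (μ i) := by omega
  have hm2 : ¬ (m.val < Cnt μ (μ i + 1)) := by omega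
  have hle1 := (lt_cnt_iff hμ (μ i) m).mp hm1
  have hle2 : μ m ≤ μ i := by
    by_contra hc
    exact hm2 ((lt_cnt_iff hμ (μ i + 1) m).mpr (by omega))
  omega

lemma tau_val (hμ : Antitone μ) (i' : Fin n) :
    (tauMap hμ i').val =
      Cnt μ (μ (Fin.rev i') + 1) + (Cnt μ (μ (Fin.rev i')) - 1 - (Fin.rev i').val) := rfl

lemma sig_val (hμ : Antitone μ) (i : Fin n) :
    (sigMap hμ i).val = n - Cnt μ (μ i) + (i.val - Cnt μ (μ i + 1)) := rfl

lemma tau_mu (hμ : Antitone μ) (i' : Fin n) : μ (tauMap hμ i') = μ (Fin.rev i') := by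
  have h1 : (Fin.rev i').val < Cnt μ (μ (Fin.rev i')) := i_lt_cnt hμ le_rfl
  have h2 := cnt_le μ (μ (Fin.rev i'))
  have h3 : Cnt μ (μ (Fin.rev i') + 1) ≤ (Fin.rev i').val := by
    by_contra hc
    have := (lt_cnt_iff hμ (μ (Fin.rev i') + 1) (Fin.rev i')).mp (by omega); omega
  have hv := tau_val hμ i'
  have hm1 : (tauMap hμ i').val < Cnt μ (μ (Fin.rev i')) := by omega
  have hm2 : ¬ ((tauMap hμ i').val < Cnt μ (μ (Fin.rev i') + 1)) := by omega
  have hle1 := (lt_cnt_iff hμ (μ (Fin.rev i')) (tauMap hμ i')).mp hm1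
  have hle2 : μ (tauMap hμ i') ≤ μ (Fin.rev i') := by
    by_contra hc
    exact hm2 ((lt_cnt_iff hμ (μ (Fin.rev i') + 1) (tauMap hμ i')).mpr (by omega))
  omega

lemma cross_prod {R : Type*} [CommRing R] (q t : R) (hμ : Antitone μ) :
    (∏ i : Fin n, ∏ r ∈ Finset.Icc 1 (μ i - 1),
        (1 - q ^ legC μ i r * t ^ (armC μ i r + 1))) =
    ∏ i : Fin n, ∏ r ∈ Finset.Icc 2 ((μ ∘ Fin.rev) i),
        (1 - q ^ (legC (μ ∘ Fin.rev) i r + 1) * t ^ (armC (μ ∘ Fin.rev) i r + 1)) := by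
  rw [Finset.prod_sigma', Finset.prod_sigma']
  refine Finset.prod_nbij' (fun s => ⟨sigMap hμ s.1, s.2 + 1⟩)
    (fun s => ⟨tauMap hμ s.1, s.2 - 1⟩) ?_ ?_ ?_ ?_ ?_
  · rintro ⟨i, r⟩ hs
    simp only [Finset.mem_sigma, Finset.mem_univ, Finset.mem_Icc, true_and] at hs ⊢
    rw [Function.comp_apply, sig_mu hμ]
    omega
  · rintro ⟨i', r'⟩ hs
    simp only [Finset.mem_sigma, Finset.mem_univ, Finset.mem_Icc, true_and,
      Function.comp_apply] at hs ⊢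
    rw [tau_mu hμ]
    omega
  · rintro ⟨i, r⟩ hs
    simp only [Finset.mem_sigma, Finset.mem_univ, Finset.mem_Icc, true_and] at hs
    have hτ : tauMap hμ (sigMap hμ i) = i := by
      apply Fin.ext
      have h1 : i.val < Cnt μ (μ i) := i_lt_cnt hμ le_rfl
      have h2 := cnt_le μ (μ i)
      have h3 := sig_p_le hμ i
      have h4 := sig_rev_val hμ i
      have h5 := sig_mu hμ i
      simp only [tauMap, h5, h4]
      omega
    simp [hτ]
  · rintro ⟨i', r'⟩ hs
    simp only [Finset.mem_sigma, Finset.mem_univ, Finset.mem_Icc, true_and,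
      Function.comp_apply] at hs
    have hσ : sigMap hμ (tauMap hμ i') = i' := by
      apply Fin.ext
      have h1 : (Fin.rev i').val < Cnt μ (μ (Fin.rev i')) := i_lt_cnt hμ le_rfl
      have h2 := cnt_le μ (μ (Fin.rev i'))
      have h3 : Cnt μ (μ (Fin.rev i') + 1) ≤ (Fin.rev i').val := by
        by_contra hc
        have := (lt_cnt_iff hμ (μ (Fin.rev i') + 1) (Fin.rev i')).mp (by omega); omega
      have h5 := tau_mu hμ i'
      have hkv : (Fin.rev i').val = n - 1 - i'.val := by rw [Fin.val_rev]; omega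
      have hiv := i'.isLt
      rw [sig_val, h5, tau_val]
      omega
    simp [hσ]
    omega
  · rintro ⟨i, r⟩ hs
    simp only [Finset.mem_sigma, Finset.mem_univ, Finset.mem_Icc, true_and] at hs
    have hv2 : 2 ≤ μ i := by omega
    have hrv : r + 1 ≤ μ i := by omega
    have h5 := sig_mu hμ i
    have harm1 : armC μ i r = Cnt μ r - 1 - i.val := armC_dec hμ i r (by omega)
    have harm2 := armC_rev hμ (sigMap hμ i) (r+1) (by omega) (by rw [h5]; omega)
    have h4 := sig_rev_val hμ i
    have h1 : i.val < Cnt μ (μ i) := i_lt_cnt hμ le_rfl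
    have h1' : i.val < Cnt μ r := i_lt_cnt hμ (by omega)
    have h2 := cnt_le μ (μ i)
    have h3 := sig_p_le hμ i
    have hcc : Cnt μ (μ i) ≤ Cnt μ r := cnt_anti (by omega)
    have hleg : legC μ i r = legC (μ ∘ Fin.rev) (sigMap hμ i) (r+1) + 1 := by
      simp only [legC, Function.comp_apply, h5]
      omega
    have harm : armC μ i r = armC (μ ∘ Fin.rev) (sigMap hμ i) (r+1) := by
      rw [harm1, harm2, h5, h4]
      have : r + 1 - 1 = r := by omega
      rw [this]
      omega
    rw [hleg, harm]

end Stmt10Aux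

open Stmt10Aux in
/-- For a partition `μ` (weakly decreasing), `PR1(μ) = ∏_{s ∈ dg(μ)} (1 - q^{leg s}
t^{arm s + 1})` equals `PR2(inc μ) = ∏_{i ≥ 1} (t;t)_{m_i} · ∏_{s ∈ dg(inc μ), s not in
the bottom row} (1 - q^{leg s + 1} t^{arm s + 1})`, where `m_i` is the number of parts
of `μ` equal to `i` and `inc μ` sorts the parts into weakly increasing order. -/
theorem stmt10 {R : Type*} [CommRing R] (q t : R) (n : ℕ) (μ : Fin n → ℕ)
    (hμ : Antitone μ) :
    (∏ i : Fin n, ∏ r ∈ Finset.Icc 1 (μ i),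
        (1 - q ^ legC μ i r * t ^ (armC μ i r + 1))) =
    (∏ v ∈ (Finset.image μ Finset.univ).filter (fun v => 0 < v),
        ttpoch t ((Finset.univ.filter (fun j : Fin n => μ j = v)).card)) *
      ∏ i : Fin n, ∏ r ∈ Finset.Icc 2 ((μ ∘ Fin.rev) i),
        (1 - q ^ (legC (μ ∘ Fin.rev) i r + 1) * t ^ (armC (μ ∘ Fin.rev) i r + 1)) := by

  have split : ∀ i : Fin n,
      (∏ r ∈ Finset.Icc 1 (μ i), (1 - q ^ legC μ i r * t ^ (armC μ i r + 1))) =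
      (∏ r ∈ Finset.Icc 1 (μ i - 1), (1 - q ^ legC μ i r * t ^ (armC μ i r + 1))) *
        (if 0 < μ i then (1 - t ^ (Cnt μ (μ i) - i.val)) else 1) := by
    intro i
    rcases Nat.eq_zero_or_pos (μ i) with h|h
    · rw [h]; simp
    · have hins : Finset.Icc 1 (μ i) = insert (μ i) (Finset.Icc 1 (μ i - 1)) := by
        ext x; simp only [Finset.mem_Icc, Finset.mem_insert]; omega
      rw [hins, Finset.prod_insert (by simp only [Finset.mem_Icc]; omega), if_pos h, mul_comm]
      congr 1
      have hleg : legC μ i (μ i) = 0 := by simp [legC]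
      have harm : armC μ i (μ i) + 1 = Cnt μ (μ i) - i.val := by
        rw [armC_dec hμ i (μ i) le_rfl]
        have := i_lt_cnt hμ (le_refl (μ i))
        omega
      rw [hleg, harm, pow_zero, one_mul]
  rw [Finset.prod_congr rfl (fun i _ => split i), Finset.prod_mul_distrib,
    top_cells t hμ, cross_prod q t hμ]
  exact mul_comm _ _
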